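/- arXiv:1310.5245 — 3 statements merged into one kernel-verified Lean document; each statement's English description precedes it below -/
import Mathlib

section
/- Let M be an m×n matrix with entries in {0,1} (m,n ≥ 1) with M_{1,1}=1 and M_{m,n}=1. If there exists a semi-sparse staircase of M that ends at position (m,n), then the greedy staircase of M also ends at position (m,n). Consequently, the greedy staircase of M ends at (m,n) if and only if some semi-sparse staircase of M ends at (m,n). -/
/-- One step of a semi-sparse staircase: a (consecutive) right move or a
skipping upward move. -/
def SemiSparseStep (p q : ℕ × ℕ) : Prop :=
  q = (p.1, p.2 + 1) ∨ (q.2 = p.2 ∧ p.1 < q.1)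

/-- A semi-sparse staircase of the m×n Boolean matrix `M` (indices `1..m × 1..n`):
a finite sequence of positions starting at `(1,1)`, consisting of `1`-entries of `M`,
where each move is a right move or a skipping upward move. -/
def IsSemiSparseStaircase (M : ℕ → ℕ → Bool) (m n : ℕ) (P : List (ℕ × ℕ)) : Prop :=
  P.head? = some (1, 1) ∧
  (∀ p ∈ P, M p.1 p.2 = true ∧ 1 ≤ p.1 ∧ p.1 ≤ m ∧ 1 ≤ p.2 ∧ p.2 ≤ n) ∧
  List.Chain' SemiSparseStep P

/-- The greedy next-move relation at position `p`: if a right move is possible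
(`p.2 < n` and `M p.1 (p.2+1) = 1`) then move right; otherwise move up to the
lowest `1`-entry strictly above `p` in the same column (within row range `≤ m`). -/
def GreedyStep (M : ℕ → ℕ → Bool) (m n : ℕ) (p q : ℕ × ℕ) : Prop :=
  (p.2 < n ∧ M p.1 (p.2 + 1) = true ∧ q = (p.1, p.2 + 1)) ∨
  (¬ (p.2 < n ∧ M p.1 (p.2 + 1) = true) ∧
    q.2 = p.2 ∧ p.1 < q.1 ∧ q.1 ≤ m ∧ M q.1 p.2 = true ∧
    ∀ k, p.1 < k → k < q.1 → M k p.2 = false)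

/-- The greedy staircase of `M`: starts at `(1,1)`, follows the greedy rule at each
step, and is maximal (its last position admits no further greedy move). -/
def IsGreedyStaircase (M : ℕ → ℕ → Bool) (m n : ℕ) (P : List (ℕ × ℕ)) : Prop :=
  P.head? = some (1, 1) ∧ List.Chain' (GreedyStep M m n) P ∧
  ∀ p, P.getLast? = some p → ∀ q, ¬ GreedyStep M m n p q

/-- A good position: a `1`-entry of `M` within the index range. -/
def GoodPos (M : ℕ → ℕ → Bool) (m n : ℕ) (p : ℕ × ℕ) : Prop :=
  M p.1 p.2 = true ∧ 1 ≤ p.1 ∧ p.1 ≤ m ∧ 1 ≤ p.2 ∧ p.2 ≤ n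

/-- `(m,n)` is reachable from `p` by semi-sparse steps through good positions. -/
inductive Reach (M : ℕ → ℕ → Bool) (m n : ℕ) : ℕ × ℕ → Prop
  | base : Reach M m n (m, n)
  | step {p q : ℕ × ℕ} (h : SemiSparseStep p q) (hq : GoodPos M m n q)
      (hr : Reach M m n q) : Reach M m n p

/-- If `(m,n)` is reachable from `q` and `i < q.1`, `q.2 < n`, then `(m,n)` is
reachable from `(i, q.2+1)`. -/
lemma reach_right_of_above {M : ℕ → ℕ → Bool} {m n : ℕ} {q : ℕ × ℕ}
    (hr : Reach M m n q) : ∀ i, i < q.1 → q.2 < n → Reach M m n (i, q.2 + 1) := by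
  induction hr with
  | base => intro i _ hlt; exact absurd hlt (lt_irrefl n)
  | @step p q h hq hr ih =>
    intro i hi hpn
    rcases h with h | ⟨hcol, hlt⟩
    · refine Reach.step (Or.inr ?_) hq hr
      constructor
      · rw [h]
      · rw [h]; exact hi
    · have := ih i (hi.trans hlt) (hcol ▸ hpn)
      rwa [hcol] at this

/-- From any reachable position other than `(m,n)`, the greedy step exists and
preserves reachability. -/
lemma exists_greedyStep {M : ℕ → ℕ → Bool} {m n : ℕ} {p : ℕ × ℕ}
    (hp : Reach M m n p) (hne : p ≠ (m, n)) :
    ∃ q, GreedyStep M m n p q ∧ Reach M m n q := by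
  rcases hp with _ | ⟨h, hq, hr⟩
  · exact absurd rfl hne
  case step p₁ =>
    rcases h with h | ⟨hcol, hlt⟩
    · -- right move in witness
      refine ⟨p₁, Or.inl ⟨?_, ?_, h⟩, hr⟩
      · have := hq.2.2.2.2; rw [h] at this; exact this
      · have := hq.1; rw [h] at this; exact this
    · -- up move in witness
      by_cases hR : p.2 < n ∧ M p.1 (p.2 + 1) = true
      · refine ⟨(p.1, p.2 + 1), Or.inl ⟨hR.1, hR.2, rfl⟩, ?_⟩
        have := reach_right_of_above hr p.1 hlt (hcol ▸ hR.1)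
        rwa [hcol] at this
      · have hw : p.1 < p₁.1 ∧ M p₁.1 p.2 = true := ⟨hlt, by rw [← hcol]; exact hq.1⟩
        have hex : ∃ k, p.1 < k ∧ M k p.2 = true := ⟨p₁.1, hw⟩
        classical
        set k := Nat.find hex with hk
        have hks := Nat.find_spec hex
        have hkle : k ≤ p₁.1 := Nat.find_le hw
        refine ⟨(k, p.2), Or.inr ⟨hR, rfl, hks.1, hkle.trans hq.2.2.1, hks.2, ?_⟩, ?_⟩
        · intro j hj hjk
          have := Nat.find_min hex hjk
          simpa [hj] using this
        · rcases lt_or_eq_of_le hkle with hlt' | heq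
          · exact Reach.step (Or.inr ⟨by simpa using hcol, hlt'⟩) hq hr
          · have : p₁ = (k, p.2) := by
              rw [heq]; exact Prod.ext rfl hcol
            rwa [← this]

/-- The greedy step is deterministic. -/
lemma greedyStep_det {M : ℕ → ℕ → Bool} {m n : ℕ} {p q q' : ℕ × ℕ}
    (h : GreedyStep M m n p q) (h' : GreedyStep M m n p q') : q = q' := by
  rcases h with ⟨h1, h2, h3⟩ | ⟨h1, h2, h3, h4, h5, h6⟩
  · rcases h' with ⟨_, _, h3'⟩ | ⟨h1', _⟩
    · rw [h3, h3']
    · exact absurd ⟨h1, h2⟩ h1'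
  · rcases h' with ⟨h1', h2', _⟩ | ⟨_, h2', h3', h4', h5', h6'⟩
    · exact absurd ⟨h1', h2'⟩ h1
    · have hrow : q.1 = q'.1 := by
        rcases lt_trichotomy q.1 q'.1 with hlt | heq | hlt
        · exact absurd h5 (by simp [h6' q.1 h3 hlt])
        · exact heq
        · exact absurd h5' (by simp [h6 q'.1 h3' hlt])
      exact Prod.ext hrow (h2.trans h2'.symm)

/-- There is no greedy step from `(m, n)`. -/
lemma no_greedyStep_top {M : ℕ → ℕ → Bool} {m n : ℕ} (q : ℕ × ℕ) :
    ¬ GreedyStep M m n (m, n) q := by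
  rintro (⟨h1, _⟩ | ⟨_, _, h3, h4, _⟩)
  · exact absurd h1 (lt_irrefl n)
  · exact absurd h3 (not_lt.mpr h4)

/-- Reachability propagates to the last element of a greedy chain. -/
lemma reach_getLast {M : ℕ → ℕ → Bool} {m n : ℕ} :
    ∀ (L : List (ℕ × ℕ)) (a : ℕ × ℕ), List.Chain (GreedyStep M m n) a L →
      Reach M m n a → Reach M m n ((a :: L).getLast (List.cons_ne_nil a L)) := by
  intro L
  induction L with
  | nil => intro a _ ha; simpa using ha
  | cons b L ih =>
    intro a hchain ha
    obtain ⟨hab, hbl⟩ := List.isChain_cons_cons.mp hchain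
    have hane : a ≠ (m, n) := by
      rintro rfl; exact no_greedyStep_top b hab
    obtain ⟨q, hq, hrq⟩ := exists_greedyStep ha hane
    have hb : Reach M m n b := by rwa [greedyStep_det hq hab] at hrq
    have := ih b hbl hb
    simpa [List.getLast] using this

/-- All positions along a greedy chain starting at a good position are good. -/
lemma good_of_chain {M : ℕ → ℕ → Bool} {m n : ℕ} :
    ∀ (L : List (ℕ × ℕ)) (a : ℕ × ℕ), GoodPos M m n a →
      List.Chain (GreedyStep M m n) a L → ∀ x ∈ a :: L, GoodPos M m n x := by
  intro L
  induction L with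
  | nil =>
    intro a ha _ x hx
    have : x = a := by simpa using hx
    rw [this]; exact ha
  | cons b L ih =>
    intro a ha hchain x hx
    obtain ⟨hab, hbl⟩ := List.isChain_cons_cons.mp hchain
    have hb : GoodPos M m n b := by
      rcases hab with ⟨h1, h2, h3⟩ | ⟨h1, h2, h3, h4, h5, _⟩
      · exact ⟨by rw [h3]; exact h2, by rw [h3]; exact ha.2.1, by rw [h3]; exact ha.2.2.1,
          by rw [h3]; exact Nat.le_succ_of_le ha.2.2.2.1, by rw [h3]; exact h1⟩
      · exact ⟨by rw [h2]; exact h5, le_of_lt (lt_of_le_of_lt ha.2.1 h3), h4,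
          by rw [h2]; exact ha.2.2.2.1, by rw [h2]; exact ha.2.2.2.2⟩
    rcases List.mem_cons.mp hx with rfl | hx
    · exact ha
    · exact ih b hb hbl x hx

/-- Every greedy step is a semi-sparse step. -/
lemma semiSparse_of_greedy {M : ℕ → ℕ → Bool} {m n : ℕ} {p q : ℕ × ℕ}
    (h : GreedyStep M m n p q) : SemiSparseStep p q := by
  rcases h with ⟨_, _, h3⟩ | ⟨_, h2, h3, _⟩
  · exact Or.inl h3
  · exact Or.inr ⟨h2, h3⟩

/-- The head of a semi-sparse staircase ending at `(m,n)` can reach `(m,n)`. -/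
lemma reach_of_staircase {M : ℕ → ℕ → Bool} {m n : ℕ} :
    ∀ (L : List (ℕ × ℕ)), List.Chain' SemiSparseStep L →
      (∀ x ∈ L, GoodPos M m n x) → L.getLast? = some (m, n) →
      ∀ a, L.head? = some a → Reach M m n a := by
  intro L
  induction L with
  | nil => intro _ _ _ a ha; simp at ha
  | cons b L ih =>
    intro hchain hgood hlast a ha
    have hab : b = a := by simpa using ha
    subst hab
    cases L with
    | nil =>
      have : b = (m, n) := by simpa using hlast
      rw [this]; exact Reach.base
    | cons c L =>
      obtain ⟨hac, hcl⟩ := List.isChain_cons_cons.mp hchain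
      have hc : Reach M m n c := by
        refine ih hcl ?_ ?_ c rfl
        · intro x hx; exact hgood x (List.mem_cons_of_mem b hx)
        · simpa [List.getLast?_cons_cons] using hlast
      exact Reach.step hac (hgood c (by simp)) hc

/-- If some semi-sparse staircase of `M` ends at `(m,n)`, then the greedy staircase
also ends at `(m,n)`; consequently, the greedy staircase ends at `(m,n)` iff some
semi-sparse staircase does. -/
theorem greedy_staircase_complete (M : ℕ → ℕ → Bool) (m n : ℕ)
    (hm : 1 ≤ m) (hn : 1 ≤ n) (h11 : M 1 1 = true) (hmn : M m n = true)
    (S : List (ℕ × ℕ)) (hS : IsGreedyStaircase M m n S) :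
    ((∃ S' : List (ℕ × ℕ), IsSemiSparseStaircase M m n S' ∧ S'.getLast? = some (m, n)) →
      S.getLast? = some (m, n)) ∧
    (S.getLast? = some (m, n) ↔
      ∃ S' : List (ℕ × ℕ), IsSemiSparseStaircase M m n S' ∧ S'.getLast? = some (m, n)) := by
  obtain ⟨hhead, hchain, hmax⟩ := hS
  cases S with
  | nil => simp at hhead
  | cons a L =>
    have ha : a = (1, 1) := by simpa using hhead
    subst ha
    have hchain' : List.Chain (GreedyStep M m n) (1, 1) L := hchain
    have hgood11 : GoodPos M m n (1, 1) := ⟨h11, le_refl 1, hm, le_refl 1, hn⟩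
    have key : (∃ S' : List (ℕ × ℕ), IsSemiSparseStaircase M m n S' ∧
        S'.getLast? = some (m, n)) → ((1, 1) :: L).getLast? = some (m, n) := by
      rintro ⟨S', ⟨hh', hg', hc'⟩, hl'⟩
      have hreach : Reach M m n (1, 1) := reach_of_staircase S' hc' hg' hl' (1, 1) hh'
      have hlastr : Reach M m n (((1, 1) :: L).getLast (List.cons_ne_nil _ L)) :=
        reach_getLast L (1, 1) hchain' hreach
      have hlq : ((1, 1) :: L).getLast? =
          some (((1, 1) :: L).getLast (List.cons_ne_nil _ L)) :=
        List.getLast?_eq_getLast _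
      by_contra hne
      have hne' : ((1, 1) :: L).getLast (List.cons_ne_nil _ L) ≠ (m, n) := by
        intro heq; exact hne (by rw [hlq, heq])
      obtain ⟨q, hq, _⟩ := exists_greedyStep hlastr hne'
      exact hmax _ hlq q hq
    refine ⟨key, ⟨fun hlast => ⟨(1, 1) :: L, ⟨rfl, ?_, ?_⟩, hlast⟩, key⟩⟩
    · exact good_of_chain L (1, 1) hgood11 hchain'
    · exact List.IsChain.imp (fun _ _ => semiSparse_of_greedy) hchain
end

section
/- Let M be an m×n matrix with entries in {0,1} (m,n ≥ 1) with M_{1,1}=1, let S be the greedy staircase of M, and let S' be any semi-sparse staircase of M. Then for every position (k,j) occurring in S', the greedy staircase S contains a position (i,j) in the same column j with i ≤ k. -/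
lemma climb (M : ℕ → ℕ → Bool) (m n : ℕ) :
    ∀ T : List (ℕ × ℕ), List.Chain' (GreedyStep M m n) T →
    (∀ p, T.getLast? = some p → ∀ q, ¬ GreedyStep M m n p q) →
    ∀ i k j, (i, j) ∈ T → i ≤ k → k ≤ m → j < n →
      M k j = true → M k (j+1) = true →
      ∃ i', i' ≤ k ∧ (i', j+1) ∈ T := by
  intro T
  induction T with
  | nil => intro _ _ i k j h; simp at h
  | cons a T' ih =>
    intro hchain hlast i k j hmem hik hkm hjn hkj hkj1
    rcases List.mem_cons.mp hmem with heq | hmem'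
    · -- a = (i, j)
      match T' with
      | [] =>
        exfalso
        have hl := hlast a (by simp) 
        rw [← heq] at hl
        by_cases hM : M i (j+1) = true
        · exact hl (i, j+1) (Or.inl ⟨hjn, hM, rfl⟩)
        · have hMf : M i (j+1) = false := by simpa using hM
          have hikne : i < k := by
            rcases lt_or_eq_of_le hik with h | h
            · exact h
            · exfalso; rw [h] at hMf; rw [hMf] at hkj1; simp at hkj1
          have hex : ∃ k', i < k' ∧ M k' j = true := ⟨k, hikne, hkj⟩
          set k0 := Nat.find hex with hk0
          obtain ⟨hik0, hMk0⟩ := Nat.find_spec hex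
          have hk0k : k0 ≤ k := Nat.find_min' hex ⟨hikne, hkj⟩
          refine hl (k0, j) (Or.inr ⟨?_, rfl, hik0, le_trans hk0k hkm, hMk0, ?_⟩)
          · simp [hMf]
          · intro k' h1 h2
            have := Nat.find_min hex h2
            simp only [not_and] at this
            by_contra hc
            exact this h1 (by simpa using hc)
      | b :: T'' =>
        have hstep : GreedyStep M m n a b := (List.isChain_cons_cons.mp hchain).1
        rw [← heq] at hstep
        rcases hstep with ⟨_, _, hb⟩ | ⟨hno, hb2, hilt, hbm, hMb, hmin⟩
        · exact ⟨i, hik, by rw [hb]; simp⟩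
        · have hMf : M i (j+1) = false := by
            simp only [not_and] at hno
            simpa using fun h => hno hjn h
          have hikne : i < k := by
            rcases lt_or_eq_of_le hik with h | h
            · exact h
            · exfalso; rw [h] at hMf; rw [hMf] at hkj1; simp at hkj1
          have hb1k : b.1 ≤ k := by
            by_contra hc
            push_neg at hc
            have := hmin k hikne hc
            simp only at this
            rw [this] at hkj; simp at hkj
          have hbeq : ((b.1 : ℕ), j) = b := by
            have : b = (b.1, b.2) := rfl
            rw [this]; simp only at hb2; rw [hb2]
          have hlast' : ∀ p, (b :: T'').getLast? = some p →
              ∀ q, ¬ GreedyStep M m n p q := by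
            intro p hp
            exact hlast p (by rw [List.getLast?_cons_cons]; exact hp)
          obtain ⟨i', h1, h2⟩ := ih (List.IsChain.tail hchain) hlast' b.1 k j
            (by rw [hbeq]; simp) hb1k hkm hjn hkj hkj1
          exact ⟨i', h1, List.mem_cons_of_mem _ h2⟩
    · have hne : T' ≠ [] := List.ne_nil_of_mem hmem'
      have hlast' : ∀ p, T'.getLast? = some p → ∀ q, ¬ GreedyStep M m n p q := by
        intro p hp
        apply hlast p
        match T', hne with
        | b :: T'', _ => rw [List.getLast?_cons_cons]; exact hp
      obtain ⟨i', h1, h2⟩ := ih (List.IsChain.tail hchain) hlast' i k j hmem' hik hkm hjn hkj hkj1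
      exact ⟨i', h1, List.mem_cons_of_mem _ h2⟩

lemma prop2 (M : ℕ → ℕ → Bool) (m n : ℕ)
    (S : List (ℕ × ℕ)) (hSc : List.Chain' (GreedyStep M m n) S)
    (hSl : ∀ p, S.getLast? = some p → ∀ q, ¬ GreedyStep M m n p q) :
    ∀ P : List (ℕ × ℕ), List.Chain' SemiSparseStep P →
    (∀ p ∈ P, M p.1 p.2 = true ∧ 1 ≤ p.1 ∧ p.1 ≤ m ∧ 1 ≤ p.2 ∧ p.2 ≤ n) →
    ∀ p0, P.head? = some p0 → (∃ i, i ≤ p0.1 ∧ (i, p0.2) ∈ S) →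
    ∀ p ∈ P, ∃ i, i ≤ p.1 ∧ (i, p.2) ∈ S := by
  intro P
  induction P with
  | nil => intro _ _ p0 h; simp at h
  | cons a P' ih =>
    intro hchain hbound p0 hhead hw p hp
    have ha : a = p0 := by simpa using hhead
    subst ha
    rcases List.mem_cons.mp hp with rfl | hp'
    · exact hw
    · -- establish the witness for the head of P'
      match P' with
      | [] => simp at hp'
      | b :: P'' =>
        have hstep : SemiSparseStep a b := (List.isChain_cons_cons.mp hchain).1
        have hwb : ∃ i, i ≤ b.1 ∧ (i, b.2) ∈ S := by
          rcases hstep with hb | ⟨hb2, hlt⟩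
          · obtain ⟨i, hik, hiS⟩ := hw
            obtain ⟨hM0, _, h0m, _, _⟩ := hbound a (by simp)
            obtain ⟨hMb, _, _, _, hbn⟩ := hbound b (by simp)
            have hjn : a.2 < n := by rw [hb] at hbn; simpa using hbn
            have hMb' : M a.1 (a.2 + 1) = true := by rw [hb] at hMb; simpa using hMb
            obtain ⟨i', h1, h2⟩ := climb M m n S hSc hSl i a.1 a.2 hiS hik h0m hjn hM0 hMb'
            rw [hb]
            exact ⟨i', h1, h2⟩
          · obtain ⟨i, hik, hiS⟩ := hw
            exact ⟨i, le_of_lt (lt_of_le_of_lt hik hlt), by rw [hb2]; exact hiS⟩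
        exact ih (List.IsChain.tail hchain)
          (fun q hq => hbound q (List.mem_cons_of_mem _ hq)) b rfl hwb p hp'

/-- For every position `(k,j)` of any semi-sparse staircase `S'`, the greedy
staircase `S` contains a position `(i,j)` in the same column with `i ≤ k`. -/
theorem greedy_staircase_below (M : ℕ → ℕ → Bool) (m n : ℕ)
    (hm : 1 ≤ m) (hn : 1 ≤ n) (h11 : M 1 1 = true)
    (S : List (ℕ × ℕ)) (hS : IsGreedyStaircase M m n S)
    (S' : List (ℕ × ℕ)) (hS' : IsSemiSparseStaircase M m n S')
    (k j : ℕ) (hkj : (k, j) ∈ S') :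
    ∃ i : ℕ, i ≤ k ∧ (i, j) ∈ S := by
  obtain ⟨hSh, hSc, hSl⟩ := hS
  obtain ⟨hSh', hSb', hSc'⟩ := hS'
  have h11S : ((1 : ℕ), (1 : ℕ)) ∈ S :=
    List.mem_of_mem_head? (by simp [Option.mem_def, hSh])
  exact prop2 M m n S hSc hSl S' hSc' hSb' (1, 1) hSh' ⟨1, le_refl 1, h11S⟩ (k, j) hkj
end

section
/- Let X and Y be finite multisets of real numbers and let N = |X| + |Y| (cardinalities counted with multiplicity). Suppose d₁ is an approximate median (in the middle half) of X, i.e., the number of elements x of X with x ≤ d₁ is at least |X|/4 and the number of elements x of X with x ≥ d₁ is at least |X|/4; and suppose d₂ satisfies the analogous two conditions with respect to Y. Then at least one of d₁, d₂ is in the middle three quarters of the combined multiset X + Y, i.e., there is d ∈ {d₁, d₂} such that the number of elements z of X + Y with z ≤ d is at least N/8 and the number of elements z of X + Y with z ≥ d is at least N/8. -/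
lemma filter_le_mono_card (S : Multiset ℝ) {a b : ℝ} (h : a ≤ b) :
    ((S.filter (fun x => x ≤ a)).card : ℝ) ≤ ((S.filter (fun x => x ≤ b)).card : ℝ) := by
  exact_mod_cast Multiset.card_le_card
    (Multiset.monotone_filter_right S (fun x hx => le_trans hx h))

lemma filter_ge_mono_card (S : Multiset ℝ) {a b : ℝ} (h : a ≤ b) :
    ((S.filter (fun x => b ≤ x)).card : ℝ) ≤ ((S.filter (fun x => a ≤ x)).card : ℝ) := by
  exact_mod_cast Multiset.card_le_card
    (Multiset.monotone_filter_right S (fun x hx => le_trans h hx))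

/-- If `d₁` is an approximate median (in the middle half) of the finite multiset `X`
of reals and `d₂` is an approximate median (in the middle half) of `Y`, then at least
one of `d₁, d₂` lies in the middle three quarters of the combined multiset `X + Y`
(all element counts taken with multiplicity, `N = |X| + |Y|`). -/
theorem approx_median_combine (X Y : Multiset ℝ) (d₁ d₂ : ℝ)
    (hX1 : (X.card : ℝ) / 4 ≤ ((X.filter (fun x => x ≤ d₁)).card : ℝ))
    (hX2 : (X.card : ℝ) / 4 ≤ ((X.filter (fun x => d₁ ≤ x)).card : ℝ))
    (hY1 : (Y.card : ℝ) / 4 ≤ ((Y.filter (fun x => x ≤ d₂)).card : ℝ))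
    (hY2 : (Y.card : ℝ) / 4 ≤ ((Y.filter (fun x => d₂ ≤ x)).card : ℝ)) :
    ∃ d ∈ ({d₁, d₂} : Set ℝ),
      ((X.card + Y.card : ℕ) : ℝ) / 8 ≤ (((X + Y).filter (fun z => z ≤ d)).card : ℝ) ∧
      ((X.card + Y.card : ℕ) : ℝ) / 8 ≤ (((X + Y).filter (fun z => d ≤ z)).card : ℝ) := by
  rcases le_total d₁ d₂ with h12 | h21 <;>
    rcases le_total (X.card : ℝ) (Y.card : ℝ) with hc | hc
  · refine ⟨d₂, Or.inr rfl, ?_, ?_⟩ <;>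
      simp only [Multiset.filter_add, Multiset.card_add, Nat.cast_add]
    · have := filter_le_mono_card X h12; linarith
    · have : (0:ℝ) ≤ ((X.filter (fun x => d₂ ≤ x)).card : ℝ) := by positivity
      linarith
  · refine ⟨d₁, Or.inl rfl, ?_, ?_⟩ <;>
      simp only [Multiset.filter_add, Multiset.card_add, Nat.cast_add]
    · have : (0:ℝ) ≤ ((Y.filter (fun x => x ≤ d₁)).card : ℝ) := by positivity
      linarith
    · have := filter_ge_mono_card Y h12; linarith
  · refine ⟨d₂, Or.inr rfl, ?_, ?_⟩ <;>
      simp only [Multiset.filter_add, Multiset.card_add, Nat.cast_add]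
    · have : (0:ℝ) ≤ ((X.filter (fun x => x ≤ d₂)).card : ℝ) := by positivity
      linarith
    · have := filter_ge_mono_card X h21; linarith
  · refine ⟨d₁, Or.inl rfl, ?_, ?_⟩ <;>
      simp only [Multiset.filter_add, Multiset.card_add, Nat.cast_add]
    · have := filter_le_mono_card Y h21; linarith
    · have : (0:ℝ) ≤ ((Y.filter (fun x => d₁ ≤ x)).card : ℝ) := by positivity
      linarith
end
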